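/- Let n ≥ n_0 ≥ 0 and let u ∈ R^∞_+ be α-moderate from n_0 onwards. Suppose ‖w_k − w*‖ ≤ u_k for all n_0 ≤ k ≤ n. Then, with T_{n+1} := Σ_{k=n_0+1}^n (∏_{j=k+1}^n (I − α_j X_1)) [(α_k/β_k) I − (α_{k−1}/β_{k−1})(I − α_k X_1)] W_1 W_2^{-1} (w_k − w*), it holds that ‖T_{n+1}‖ ≤ (2e^{q_1/2}/q_1) C_U ‖W_1 W_2^{-1}‖ C_θ (α_n/β_n) u_n, where C_U = ‖X_1‖ + 2(α−β)(1+‖X_1‖) and C_θ is the explicit constant from the product bound ∏_{k=i}^n ‖I − α_k X_1‖ ≤ C_θ e^{−q_1 Σ_{k=i}^n α_k}. -/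

import Mathlib

open Matrix
open scoped RealInnerProductSpace BigOperators

noncomputable section

abbrev E (d : ℕ) := EuclideanSpace ℝ (Fin d)

variable {d : ℕ}

/-- Apply a matrix to a vector of Euclidean space. -/
def app (A : Matrix (Fin d) (Fin d) ℝ) (x : E d) : E d :=
  Matrix.toEuclideanCLM (𝕜 := ℝ) A x

/-- The spectral (operator `2`-) norm of a matrix. -/
def opNorm (A : Matrix (Fin d) (Fin d) ℝ) : ℝ :=
  ‖Matrix.toEuclideanCLM (𝕜 := ℝ) A‖

/-- Positive definiteness (not necessarily symmetric): `⟪x, A x⟫ > 0` for `x ≠ 0`. -/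
def PosDefNS (A : Matrix (Fin d) (Fin d) ℝ) : Prop :=
  ∀ x : E d, x ≠ 0 → 0 < ⟪x, app A x⟫

/-- Smallest eigenvalue of a symmetric matrix (Rayleigh infimum over the unit sphere). -/
def lambdaMin (A : Matrix (Fin d) (Fin d) ℝ) : ℝ :=
  ⨅ x : Metric.sphere (0 : E d) 1, ⟪(x : E d), app A (x : E d)⟫

/-- Stepsizes `(n+1)^{-a}`. -/
def steps (a : ℝ) (n : ℕ) : ℝ := ((n : ℝ) + 1) ^ (-a)

/-- The (ordered) matrix product `∏_{j=a}^{b} (I − c_j X)` (equal to `1` if `b < a`). -/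
def Mprod (X : Matrix (Fin d) (Fin d) ℝ) (c : ℕ → ℝ) (a b : ℕ) :
    Matrix (Fin d) (Fin d) ℝ :=
  ((List.range' a (b + 1 - a)).map fun j => (1 : Matrix (Fin d) (Fin d) ℝ) - c j • X).prod

/-- A positive sequence `u` is `α`-moderate (parameters `α, β, q₁`) from `k₀` onwards if
`u_k / u_{k+1} ≤ (α_{k+1}/α_k)(β_k/β_{k+1}) e^{(q₁/2) α_{k+1}}` for all `k ≥ k₀`. -/
def AlphaModerateFrom (α β q1 : ℝ) (u : ℕ → ℝ) (k0 : ℕ) : Prop :=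
  ∀ k : ℕ, k0 ≤ k →
    u k / u (k + 1) ≤
      (steps α (k + 1) / steps α k) * (steps β k / steps β (k + 1)) *
        Real.exp (q1 / 2 * steps α (k + 1))

/-! ### Auxiliary lemmas -/

lemma stmt13.opNorm_nonneg' (A : Matrix (Fin d) (Fin d) ℝ) : 0 ≤ opNorm A := norm_nonneg _

lemma stmt13.app_norm_le (A : Matrix (Fin d) (Fin d) ℝ) (x : E d) : ‖app A x‖ ≤ opNorm A * ‖x‖ :=
  ContinuousLinearMap.le_opNorm _ _

lemma stmt13.opNorm_mul_le (A B : Matrix (Fin d) (Fin d) ℝ) :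
    opNorm (A * B) ≤ opNorm A * opNorm B := by
  unfold opNorm; rw [_root_.map_mul]; exact norm_mul_le _ _

lemma stmt13.opNorm_one (hd : 0 < d) : opNorm (1 : Matrix (Fin d) (Fin d) ℝ) = 1 := by
  haveI : Nonempty (Fin d) := Fin.pos_iff_nonempty.mp hd
  haveI : Nontrivial (E d) := inferInstance
  unfold opNorm; rw [_root_.map_one]; exact norm_one

set_option synthInstance.maxHeartbeats 1000000 in
lemma stmt13.opNorm_smul (c : ℝ) (A : Matrix (Fin d) (Fin d) ℝ) :
    opNorm (c • A) = |c| * opNorm A := by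
  unfold opNorm
  rw [_root_.map_smul]
  rw [norm_smul c (Matrix.toEuclideanCLM (𝕜 := ℝ) A), Real.norm_eq_abs]

lemma stmt13.opNorm_add_le (A B : Matrix (Fin d) (Fin d) ℝ) :
    opNorm (A + B) ≤ opNorm A + opNorm B := by
  unfold opNorm; rw [map_add]; exact norm_add_le _ _

lemma stmt13.Mprod_empty (X : Matrix (Fin d) (Fin d) ℝ) (c : ℕ → ℝ) (b : ℕ) :
    Mprod X c (b + 1) b = 1 := by
  unfold Mprod
  have : b + 1 - (b + 1) = 0 := by omega
  rw [this]; simp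

lemma stmt13.Mprod_same (X : Matrix (Fin d) (Fin d) ℝ) (c : ℕ → ℝ) (a : ℕ) :
    Mprod X c a a = 1 - c a • X := by
  unfold Mprod
  have : a + 1 - a = 1 := by omega
  rw [this]; simp

lemma stmt13.Mprod_succ (X : Matrix (Fin d) (Fin d) ℝ) (c : ℕ → ℝ) (a b : ℕ) (h : a ≤ b + 1) :
    Mprod X c a (b + 1) = Mprod X c a b * (1 - c (b + 1) • X) := by
  unfold Mprod
  have h1 : b + 1 + 1 - a = (b + 1 - a) + 1 := by omega
  have h2 : a + (b + 1 - a) = b + 1 := by omega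
  rw [h1, List.range'_concat, List.map_append, List.prod_append]
  simp [h2]

lemma stmt13.opNorm_Mprod_le (X : Matrix (Fin d) (Fin d) ℝ) (c : ℕ → ℝ) (a : ℕ) :
    ∀ b : ℕ, a ≤ b → opNorm (Mprod X c a b) ≤
      ∏ k ∈ Finset.Icc a b, opNorm (1 - c k • X) := by
  intro b
  induction b with
  | zero => intro h; interval_cases a; rw [stmt13.Mprod_same]; simp
  | succ b ih =>
    intro h
    rcases Nat.lt_or_ge a (b + 1) with h' | h'
    · have hab : a ≤ b := by omega
      rw [stmt13.Mprod_succ X c a b (by omega), Finset.prod_Icc_succ_top (by omega)]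
      calc opNorm (Mprod X c a b * (1 - c (b+1) • X))
          ≤ opNorm (Mprod X c a b) * opNorm (1 - c (b+1) • X) := stmt13.opNorm_mul_le _ _
        _ ≤ _ := mul_le_mul_of_nonneg_right (ih hab) (norm_nonneg _)
    · have : a = b + 1 := by omega
      subst this
      rw [stmt13.Mprod_same]; simp

lemma stmt13.lambdaMin_pos (hd : 0 < d) (A : Matrix (Fin d) (Fin d) ℝ)
    (hA : ∀ x : E d, x ≠ 0 → 0 < ⟪x, app A x⟫) : 0 < lambdaMin A := by
  haveI : Nonempty (Fin d) := Fin.pos_iff_nonempty.mp hd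
  haveI : Nontrivial (E d) := inferInstance
  have hsn : (Metric.sphere (0 : E d) 1).Nonempty := NormedSpace.sphere_nonempty.mpr zero_le_one
  have hcont : Continuous fun x : E d => ⟪x, app A x⟫ := by
    have : Continuous fun x : E d => app A x := (Matrix.toEuclideanCLM (𝕜 := ℝ) A).continuous
    exact continuous_id.inner this
  obtain ⟨x0, hx0mem, hx0min⟩ :=
    (isCompact_sphere (0 : E d) 1).exists_isMinOn hsn hcont.continuousOn
  have hx0ne : x0 ≠ 0 := by
    intro h
    rw [Metric.mem_sphere, dist_zero_right] at hx0mem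
    rw [h] at hx0mem; simp at hx0mem
  have hpos : 0 < ⟪x0, app A x0⟫ := hA x0 hx0ne
  haveI : Nonempty (Metric.sphere (0 : E d) 1) := hsn.to_subtype
  have hle : (⟪x0, app A x0⟫ : ℝ) ≤ lambdaMin A := le_ciInf fun y => hx0min y.2
  linarith

lemma stmt13.inner_transpose (A : Matrix (Fin d) (Fin d) ℝ) (x : E d) :
    ⟪x, app Aᵀ x⟫ = ⟪x, app A x⟫ := by
  have h1 : Aᵀ = Aᴴ := (Matrix.conjTranspose_eq_transpose_of_trivial A).symm
  rw [h1]
  show ⟪x, (Matrix.toEuclideanCLM (𝕜 := ℝ) (star A)) x⟫ = _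
  rw [map_star]
  rw [ContinuousLinearMap.star_eq_adjoint, ContinuousLinearMap.adjoint_inner_right]
  exact real_inner_comm _ _

lemma stmt13.steps_pos (a : ℝ) (n : ℕ) : 0 < steps a n :=
  Real.rpow_pos_of_pos (by positivity) _

lemma stmt13.steps_le_one {a : ℝ} (ha : 0 ≤ a) (n : ℕ) : steps a n ≤ 1 := by
  unfold steps
  apply Real.rpow_le_one_of_one_le_of_nonpos
  · have : (0:ℝ) ≤ n := Nat.cast_nonneg n
    linarith
  · linarith

lemma stmt13.steps_tendsto {a : ℝ} (ha : 0 < a) :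
    Filter.Tendsto (steps a) Filter.atTop (nhds 0) := by
  have h1 : Filter.Tendsto (fun n : ℕ => ((n : ℝ) + 1)) Filter.atTop Filter.atTop :=
    Filter.tendsto_atTop_add_const_right _ 1 tendsto_natCast_atTop_atTop
  exact (tendsto_rpow_neg_atTop ha).comp h1

lemma stmt13.ratio_bernoulli (m : ℕ) (γ : ℝ) (h0 : 0 < γ) (h1 : γ ≤ 1) :
    ((m:ℝ)+1)^(-γ) ≤ ((m:ℝ)+2)^(-γ) * (1 + γ/((m:ℝ)+1)) := by
  have hm1 : (0:ℝ) < (m:ℝ)+1 := by positivity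
  have hm2 : (0:ℝ) < (m:ℝ)+2 := by positivity
  have key : (((m:ℝ)+2)/((m:ℝ)+1))^γ ≤ 1 + γ/((m:ℝ)+1) := by
    have he : ((m:ℝ)+2)/((m:ℝ)+1) = 1 + 1/((m:ℝ)+1) := by
      field_simp
      ring
    rw [he]
    have := rpow_one_add_le_one_add_mul_self
      (s := 1/((m:ℝ)+1)) (le_trans (by norm_num : (-1:ℝ) ≤ 0) (by positivity)) h0.le h1
    calc (1 + 1/((m:ℝ)+1))^γ ≤ 1 + γ * (1/((m:ℝ)+1)) := this
      _ = 1 + γ/((m:ℝ)+1) := by ring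
  have heq : ((m:ℝ)+1)^(-γ) = ((m:ℝ)+2)^(-γ) * (((m:ℝ)+2)/((m:ℝ)+1))^γ := by
    rw [Real.div_rpow hm2.le hm1.le, Real.rpow_neg hm2.le, Real.rpow_neg hm1.le]
    have h2 : ((m:ℝ)+2)^γ ≠ 0 := (Real.rpow_pos_of_pos hm2 _).ne'
    field_simp
  rw [heq]
  exact mul_le_mul_of_nonneg_left key (by positivity)

lemma stmt13.ratio_mono (m : ℕ) (γ : ℝ) (h0 : 0 < γ) (h1 : γ ≤ 1) :
    ((m:ℝ)+1)^(-γ) ≤ (1 + 2*γ) * ((m:ℝ)+2)^(-γ) := by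
  have h := stmt13.ratio_bernoulli m γ h0 h1
  have hm1 : (0:ℝ) < (m:ℝ)+1 := by positivity
  have h2 : γ/((m:ℝ)+1) ≤ γ := by
    rw [div_le_iff₀ hm1]; nlinarith
  have hp : (0:ℝ) < ((m:ℝ)+2)^(-γ) := Real.rpow_pos_of_pos (by positivity) _
  nlinarith

lemma stmt13.ratio_diff (m : ℕ) (γ α : ℝ) (h0 : 0 < γ) (h1 : γ ≤ 1) (ha1 : α ≤ 1) :
    ((m:ℝ)+1)^(-γ) - ((m:ℝ)+2)^(-γ) ≤ 2*γ * ((m:ℝ)+2)^(-γ) * ((m:ℝ)+2)^(-α) := by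
  have h := stmt13.ratio_bernoulli m γ h0 h1
  have hm1 : (0:ℝ) < (m:ℝ)+1 := by positivity
  have hm2 : (0:ℝ) < (m:ℝ)+2 := by positivity
  have hp : (0:ℝ) < ((m:ℝ)+2)^(-γ) := Real.rpow_pos_of_pos hm2 _
  have hax : ((m:ℝ)+2)^α ≤ 2*((m:ℝ)+1) := by
    calc ((m:ℝ)+2)^α ≤ ((m:ℝ)+2)^(1:ℝ) :=
          Real.rpow_le_rpow_of_exponent_le (by linarith) ha1
      _ = (m:ℝ)+2 := Real.rpow_one _
      _ ≤ 2*((m:ℝ)+1) := by linarith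
  have hpa' : (0:ℝ) < ((m:ℝ)+2)^α := Real.rpow_pos_of_pos hm2 _
  have hiv : (2*((m:ℝ)+1))⁻¹ ≤ ((m:ℝ)+2)^(-α) := by
    rw [Real.rpow_neg hm2.le]
    exact inv_anti₀ hpa' hax
  have hinv : γ/((m:ℝ)+1) ≤ 2*γ*((m:ℝ)+2)^(-α) := by
    have h3 : γ/((m:ℝ)+1) = 2*γ*(2*((m:ℝ)+1))⁻¹ := by field_simp
    rw [h3]
    exact mul_le_mul_of_nonneg_left hiv (by positivity)
  nlinarith [mul_le_mul_of_nonneg_left hinv hp.le]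

lemma stmt13.telescope (f : ℕ → ℝ) (a : ℕ) :
    ∀ b : ℕ, a ≤ b → ∑ k ∈ Finset.Icc (a+1) b, (f k - f (k-1)) = f b - f a := by
  intro b
  induction b with
  | zero => intro h; interval_cases a; simp
  | succ b ih =>
    intro h
    rcases Nat.lt_or_ge a (b+1) with h' | h'
    · rw [Finset.sum_Icc_succ_top (by omega), ih (by omega)]
      simp only [Nat.add_sub_cancel]
      ring
    · have : a = b + 1 := by omega
      subst this; simp

lemma stmt13.exp_step (q1 x s : ℝ) (hq : 0 < q1) (hx : 0 < x) (hx1 : x ≤ 1) :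
    x * Real.exp (-(q1/2) * s) ≤
      2/q1 * Real.exp (q1/2) * (Real.exp (-(q1/2)*s) - Real.exp (-(q1/2)*(x + s))) := by
  have key : x ≤ 2/q1 * Real.exp (q1/2) * (1 - Real.exp (-(q1/2)*x)) := by
    have h1 : q1/2*x + 1 ≤ Real.exp (q1/2*x) := Real.add_one_le_exp _
    have h2 : Real.exp (q1/2*x) ≤ Real.exp (q1/2) := by
      apply Real.exp_le_exp.mpr; nlinarith
    have h3 : Real.exp (-(q1/2)*x) = (Real.exp (q1/2*x))⁻¹ := by
      rw [← Real.exp_neg]; ring_nf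
    have hep : 0 < Real.exp (q1/2*x) := Real.exp_pos _
    rw [h3]
    have expand : 2/q1 * Real.exp (q1/2) * (1 - (Real.exp (q1/2*x))⁻¹) - x =
        (2/q1) * (Real.exp (q1/2) * (Real.exp (q1/2*x) - 1) - q1/2*x*Real.exp (q1/2*x)) /
          Real.exp (q1/2*x) := by
      field_simp
    rw [← sub_nonneg, expand]
    have : Real.exp (q1/2) * (Real.exp (q1/2*x) - 1) - q1/2*x*Real.exp (q1/2*x) ≥ 0 := by
      have hy : (0:ℝ) ≤ q1/2*x := by positivity
      have h4 : q1/2*x ≤ Real.exp (q1/2*x) - 1 := by linarith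
      have h5 : Real.exp (q1/2*x) * (Real.exp (q1/2*x) - 1) ≤
          Real.exp (q1/2) * (Real.exp (q1/2*x) - 1) :=
        mul_le_mul_of_nonneg_right h2 (by linarith)
      have h6 : q1/2*x*Real.exp (q1/2*x) ≤ (Real.exp (q1/2*x)-1)*Real.exp (q1/2*x) :=
        mul_le_mul_of_nonneg_right h4 hep.le
      nlinarith [h5, h6]
    positivity
  have hE : 0 < Real.exp (-(q1/2)*s) := Real.exp_pos _
  have hmul := mul_le_mul_of_nonneg_right key hE.le
  calc x * Real.exp (-(q1/2)*s) ≤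
      2/q1 * Real.exp (q1/2) * (1 - Real.exp (-(q1/2)*x)) * Real.exp (-(q1/2)*s) := hmul
    _ = 2/q1 * Real.exp (q1/2) * (Real.exp (-(q1/2)*s) - Real.exp (-(q1/2)*(x+s))) := by
        have he : Real.exp (-(q1/2)*(x+s)) = Real.exp (-(q1/2)*x) * Real.exp (-(q1/2)*s) := by
          rw [← Real.exp_add]; ring_nf
        rw [he]; ring

lemma stmt13.chain (α β q1 : ℝ) (u : ℕ → ℝ) (hupos : ∀ k, 0 < u k) (n0 : ℕ)
    (hmod : AlphaModerateFrom α β q1 u n0) (m : ℕ) (hm : n0 ≤ m) :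
    ∀ N, m ≤ N → steps α m / steps β m * u m ≤
      steps α N / steps β N * u N *
        Real.exp (q1/2 * ∑ j ∈ Finset.Icc (m+1) N, steps α j) := by
  intro N hN
  induction N, hN using Nat.le_induction with
  | base =>
    have : Finset.Icc (m+1) m = ∅ := Finset.Icc_eq_empty (by omega)
    rw [this]
    simp
  | succ N hN ih =>
    have hstep : steps α N / steps β N * u N ≤
        steps α (N+1) / steps β (N+1) * u (N+1) * Real.exp (q1/2 * steps α (N+1)) := by
      have h := hmod N (le_trans hm hN)
      rw [div_le_iff₀ (hupos (N+1))] at h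
      have hr : 0 < steps α N / steps β N := by
        have := stmt13.steps_pos α N; have := stmt13.steps_pos β N; positivity
      calc steps α N / steps β N * u N
          ≤ steps α N / steps β N *
            ((steps α (N+1) / steps α N) * (steps β N / steps β (N+1)) *
              Real.exp (q1/2 * steps α (N+1)) * u (N+1)) :=
            mul_le_mul_of_nonneg_left h hr.le
        _ = steps α (N+1) / steps β (N+1) * u (N+1) * Real.exp (q1/2 * steps α (N+1)) := by
            have h1 := (stmt13.steps_pos α N).ne'
            have h2 := (stmt13.steps_pos β N).ne'
            have h3 := (stmt13.steps_pos α (N+1)).ne'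
            have h4 := (stmt13.steps_pos β (N+1)).ne'
            field_simp
    have he : 0 < Real.exp (q1/2 * ∑ j ∈ Finset.Icc (m+1) N, steps α j) := Real.exp_pos _
    calc steps α m / steps β m * u m
        ≤ steps α N / steps β N * u N *
            Real.exp (q1/2 * ∑ j ∈ Finset.Icc (m+1) N, steps α j) := ih
      _ ≤ (steps α (N+1) / steps β (N+1) * u (N+1) * Real.exp (q1/2 * steps α (N+1))) *
            Real.exp (q1/2 * ∑ j ∈ Finset.Icc (m+1) N, steps α j) :=
          mul_le_mul_of_nonneg_right hstep he.le
      _ = steps α (N+1) / steps β (N+1) * u (N+1) *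
            Real.exp (q1/2 * ∑ j ∈ Finset.Icc (m+1) (N+1), steps α j) := by
          rw [Finset.sum_Icc_succ_top (by omega : m+1 ≤ N+1), mul_assoc, ← Real.exp_add]
          ring_nf

lemma stmt13.Ctheta_ge_one (hd : 0 < d) (X1 : Matrix (Fin d) (Fin d) ℝ)
    (α q1 Cθ : ℝ) (hα : 0 < α)
    (hCθ : ∀ i n : ℕ, i ≤ n →
      ∏ k ∈ Finset.Icc i n, opNorm (1 - steps α k • X1) ≤
        Cθ * Real.exp (-q1 * ∑ k ∈ Finset.Icc i n, steps α k)) :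
    1 ≤ Cθ := by
  have hb : ∀ n : ℕ, (1 - steps α n * opNorm X1) * Real.exp (q1 * steps α n) ≤ Cθ := by
    intro n
    have h := hCθ n n le_rfl
    rw [Finset.Icc_self, Finset.prod_singleton, Finset.sum_singleton] at h
    have hlow : 1 - steps α n * opNorm X1 ≤ opNorm (1 - steps α n • X1) := by
      have := stmt13.opNorm_smul (steps α n) X1
      have h1 : opNorm (1 : Matrix (Fin d) (Fin d) ℝ) - opNorm (steps α n • X1) ≤
          opNorm (1 - steps α n • X1) := by
        unfold opNorm
        rw [map_sub]
        exact norm_sub_norm_le _ _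
      rw [stmt13.opNorm_one hd, stmt13.opNorm_smul, abs_of_pos (stmt13.steps_pos α n)] at h1
      exact h1
    have h2 : 1 - steps α n * opNorm X1 ≤ Cθ * Real.exp (-q1 * steps α n) := le_trans hlow h
    have h3 := mul_le_mul_of_nonneg_right h2 (Real.exp_pos (q1 * steps α n)).le
    calc (1 - steps α n * opNorm X1) * Real.exp (q1 * steps α n)
        ≤ Cθ * Real.exp (-q1 * steps α n) * Real.exp (q1 * steps α n) := h3
      _ = Cθ := by rw [mul_assoc, ← Real.exp_add]; ring_nf; rw [Real.exp_zero, mul_one]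
  have hF : Continuous fun s : ℝ => (1 - s * opNorm X1) * Real.exp (q1 * s) := by
    fun_prop
  have hlim : Filter.Tendsto
      (fun n : ℕ => (1 - steps α n * opNorm X1) * Real.exp (q1 * steps α n))
      Filter.atTop (nhds 1) := by
    have := (hF.tendsto 0).comp (stmt13.steps_tendsto hα)
    simpa [Function.comp_def] using this
  exact le_of_tendsto hlim (Filter.Eventually.of_forall hb)

lemma stmt13.steps_div_eq (α β : ℝ) (k : ℕ) :
    steps α k / steps β k = ((k:ℝ)+1) ^ (-(α-β)) := by
  unfold steps
  rw [show -(α-β) = -α - -β by ring, Real.rpow_sub (by positivity)]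

lemma stmt13.theta_bound (hd : 0 < d) (X1 : Matrix (Fin d) (Fin d) ℝ) (α β : ℝ)
    (hβ : 0 < β) (hβα : β < α) (hα : α < 1) (m : ℕ) :
    opNorm ((steps α (m+1) / steps β (m+1)) • (1 : Matrix (Fin d) (Fin d) ℝ) -
        (steps α m / steps β m) • ((1 : Matrix (Fin d) (Fin d) ℝ) - steps α (m+1) • X1)) ≤
      (opNorm X1 + 2*(α-β)*(1+opNorm X1)) * (steps α (m+1) / steps β (m+1)) *
        steps α (m+1) := by
  set γ := α - β with hγdef
  have hγ0 : 0 < γ := by simp [hγdef]; linarith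
  have hγ1 : γ ≤ 1 := by simp [hγdef]; linarith
  have hcast : ((m+1:ℕ):ℝ) + 1 = (m:ℝ) + 2 := by push_cast; ring
  have hrm : steps α m / steps β m = ((m:ℝ)+1) ^ (-γ) := stmt13.steps_div_eq α β m
  have hrk : steps α (m+1) / steps β (m+1) = ((m:ℝ)+2) ^ (-γ) := by
    rw [stmt13.steps_div_eq, hcast]
  have hsk : steps α (m+1) = ((m:ℝ)+2) ^ (-α) := by unfold steps; rw [hcast]
  set rm := ((m:ℝ)+1) ^ (-γ) with hrmdef
  set rk := ((m:ℝ)+2) ^ (-γ) with hrkdef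
  set s := ((m:ℝ)+2) ^ (-α) with hsdef
  have hrmpos : 0 < rm := Real.rpow_pos_of_pos (by positivity) _
  have hrkpos : 0 < rk := Real.rpow_pos_of_pos (by positivity) _
  have hspos : 0 < s := Real.rpow_pos_of_pos (by positivity) _
  have hmono : rk ≤ rm := by
    rw [hrmdef, hrkdef, Real.rpow_neg (by positivity), Real.rpow_neg (by positivity)]
    exact inv_anti₀ (Real.rpow_pos_of_pos (by positivity) _)
      (Real.rpow_le_rpow (by positivity) (by linarith) hγ0.le)
  rw [hrm, hrk, hsk]
  have hΘ : rk • (1 : Matrix (Fin d) (Fin d) ℝ) -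
      rm • ((1 : Matrix (Fin d) (Fin d) ℝ) - s • X1) =
      (rk - rm) • (1 : Matrix (Fin d) (Fin d) ℝ) + (rm * s) • X1 := by
    rw [smul_sub, smul_smul, sub_smul]
    abel
  rw [hΘ]
  have hX : 0 ≤ opNorm X1 := stmt13.opNorm_nonneg' X1
  have step1 : opNorm ((rk - rm) • (1 : Matrix (Fin d) (Fin d) ℝ) + (rm * s) • X1) ≤
      (rm - rk) + rm * s * opNorm X1 := by
    calc opNorm ((rk - rm) • (1 : Matrix (Fin d) (Fin d) ℝ) + (rm * s) • X1)
        ≤ opNorm ((rk - rm) • (1 : Matrix (Fin d) (Fin d) ℝ)) + opNorm ((rm * s) • X1) :=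
          stmt13.opNorm_add_le _ _
      _ = |rk - rm| * opNorm (1 : Matrix (Fin d) (Fin d) ℝ) + |rm * s| * opNorm X1 := by
          rw [stmt13.opNorm_smul, stmt13.opNorm_smul]
      _ = (rm - rk) + rm * s * opNorm X1 := by
          rw [stmt13.opNorm_one hd, abs_of_nonpos (by linarith), abs_of_pos (by positivity)]
          ring
  refine le_trans step1 ?_
  have d1 : rm - rk ≤ 2*γ * rk * s := stmt13.ratio_diff m γ α hγ0 hγ1 hα.le
  have d2 : rm ≤ (1 + 2*γ) * rk := stmt13.ratio_mono m γ hγ0 hγ1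
  have d3 : rm * s * opNorm X1 ≤ (1 + 2*γ) * rk * s * opNorm X1 := by
    apply mul_le_mul_of_nonneg_right _ hX
    exact mul_le_mul_of_nonneg_right d2 hspos.le
  nlinarith [mul_pos hrkpos hspos]

def stmt13.g (α q1 : ℝ) (n k : ℕ) : ℝ :=
  Real.exp (-(q1/2) * ∑ j ∈ Finset.Icc (k+1) n, steps α j)

lemma stmt13.g_n (α q1 : ℝ) (n : ℕ) : stmt13.g α q1 n n = 1 := by
  unfold stmt13.g
  rw [Finset.Icc_eq_empty (by omega), Finset.sum_empty, mul_zero, Real.exp_zero]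

lemma stmt13.g_pos (α q1 : ℝ) (n k : ℕ) : 0 < stmt13.g α q1 n k := Real.exp_pos _

lemma stmt13.S_split (α : ℝ) (m n : ℕ) (h : m + 1 ≤ n) :
    ∑ j ∈ Finset.Icc (m+1) n, steps α j =
      steps α (m+1) + ∑ j ∈ Finset.Icc (m+2) n, steps α j := by
  rw [Finset.Icc_eq_cons_Ioc h, Finset.sum_cons, ← Finset.Icc_add_one_left_eq_Ioc]
  rfl

/-- Lemma `Tn bound`.
Let `n ≥ n₀ ≥ 0`, let `u` be a positive sequence that is `α`-moderate from `n₀`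
onwards, and suppose `‖w_k − w*‖ ≤ u_k` for all `n₀ ≤ k ≤ n`.  Then with
`T_{n+1} = Σ_{k=n₀+1}^n (∏_{j=k+1}^n (I − α_j X₁))
  [(α_k/β_k) I − (α_{k−1}/β_{k−1})(I − α_k X₁)] W₁W₂⁻¹ (w_k − w*)` it holds that
`‖T_{n+1}‖ ≤ (2 e^{q₁/2}/q₁) C_U ‖W₁W₂⁻¹‖ C_θ (α_n/β_n) u_n`, where
`C_U = ‖X₁‖ + 2(α−β)(1+‖X₁‖)` and `C_θ` is the constant from the product bound
`∏_{k=i}^n ‖I − α_k X₁‖ ≤ C_θ e^{−q₁ Σ_{k=i}^n α_k}`. -/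
theorem stmt13 {d : ℕ} (hd : 0 < d)
    (X1 W1 W2 : Matrix (Fin d) (Fin d) ℝ)
    (hX1 : PosDefNS X1) (hW2 : PosDefNS W2)
    (α β : ℝ) (hβ : 0 < β) (hβα : β < α) (hα : α < 1)
    (q1 : ℝ) (hq1 : q1 = lambdaMin (X1 + X1ᵀ) / 4)
    (Cθ : ℝ)
    (hCθ : ∀ i n : ℕ, i ≤ n →
      ∏ k ∈ Finset.Icc i n, opNorm (1 - steps α k • X1) ≤
        Cθ * Real.exp (-q1 * ∑ k ∈ Finset.Icc i n, steps α k))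
    (w : ℕ → E d) (wstar : E d)
    (u : ℕ → ℝ) (hupos : ∀ k, 0 < u k)
    (n0 n : ℕ) (hn : n0 ≤ n)
    (hmod : AlphaModerateFrom α β q1 u n0)
    (hw : ∀ k : ℕ, n0 ≤ k → k ≤ n → ‖w k - wstar‖ ≤ u k) :
    ‖∑ k ∈ Finset.Icc (n0 + 1) n,
        app (Mprod X1 (steps α) (k + 1) n *
              ((steps α k / steps β k) • (1 : Matrix (Fin d) (Fin d) ℝ) -
                (steps α (k - 1) / steps β (k - 1)) •
                  ((1 : Matrix (Fin d) (Fin d) ℝ) - steps α k • X1)) *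
              (W1 * W2⁻¹))
          (w k - wstar)‖ ≤
      2 * Real.exp (q1 / 2) / q1 *
        (opNorm X1 + 2 * (α - β) * (1 + opNorm X1)) *
        opNorm (W1 * W2⁻¹) * Cθ * (steps α n / steps β n) * u n := by
  have hα0 : 0 < α := lt_trans hβ hβα
  have hq1pos : 0 < q1 := by
    rw [hq1]
    have hpd : ∀ x : E d, x ≠ 0 → 0 < ⟪x, app (X1 + X1ᵀ) x⟫ := by
      intro x hx
      have hadd : app (X1 + X1ᵀ) x = app X1 x + app X1ᵀ x := by
        unfold app; rw [map_add]; rfl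
      rw [hadd, inner_add_right, stmt13.inner_transpose]
      have := hX1 x hx
      linarith
    have := stmt13.lambdaMin_pos hd (X1 + X1ᵀ) hpd
    linarith
  have hCθ1 : 1 ≤ Cθ := stmt13.Ctheta_ge_one hd X1 α q1 Cθ hα0 hCθ
  have hCθ0 : 0 ≤ Cθ := by linarith
  have hX0 : 0 ≤ opNorm X1 := stmt13.opNorm_nonneg' X1
  have hCU0 : 0 ≤ opNorm X1 + 2*(α-β)*(1+opNorm X1) := by nlinarith
  have hCM0 : 0 ≤ opNorm (W1 * W2⁻¹) := stmt13.opNorm_nonneg' _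
  have hrn : 0 < steps α n / steps β n := by
    have := stmt13.steps_pos α n; have := stmt13.steps_pos β n; positivity
  set K := 2 * Real.exp (q1 / 2) / q1 *
      (opNorm X1 + 2 * (α - β) * (1 + opNorm X1)) *
      opNorm (W1 * W2⁻¹) * Cθ * (steps α n / steps β n) * u n with hKdef
  have hK0 : 0 ≤ K := by
    rw [hKdef]
    have e1 : 0 ≤ 2 * Real.exp (q1 / 2) / q1 := by positivity
    exact mul_nonneg (mul_nonneg (mul_nonneg (mul_nonneg (mul_nonneg e1 hCU0) hCM0)
      hCθ0) hrn.le) (hupos n).le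
  have key : ∀ k ∈ Finset.Icc (n0 + 1) n,
      ‖app (Mprod X1 (steps α) (k + 1) n *
              ((steps α k / steps β k) • (1 : Matrix (Fin d) (Fin d) ℝ) -
                (steps α (k - 1) / steps β (k - 1)) •
                  ((1 : Matrix (Fin d) (Fin d) ℝ) - steps α k • X1)) *
              (W1 * W2⁻¹))
          (w k - wstar)‖ ≤ K * (stmt13.g α q1 n k - stmt13.g α q1 n (k - 1)) := by
    intro k hk
    rw [Finset.mem_Icc] at hk
    obtain ⟨m, rfl⟩ : ∃ m, k = m + 1 := ⟨k - 1, by omega⟩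
    simp only [Nat.add_sub_cancel]
    have hkn : m + 1 ≤ n := hk.2
    have hsk : 0 < steps α (m+1) := stmt13.steps_pos α (m+1)
    have hsk1 : steps α (m+1) ≤ 1 := stmt13.steps_le_one hα0.le (m+1)
    have hP : opNorm (Mprod X1 (steps α) (m+2) n) ≤
        Cθ * Real.exp (-q1 * ∑ j ∈ Finset.Icc (m+2) n, steps α j) := by
      rcases Nat.lt_or_ge (m+1) n with h' | h'
      · exact le_trans (stmt13.opNorm_Mprod_le X1 (steps α) (m+2) n (by omega))
          (hCθ (m+2) n (by omega))
      · have hmn : n = m + 1 := by omega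
        subst hmn
        rw [show m + 1 + 1 = (m+1) + 1 from rfl, stmt13.Mprod_empty, stmt13.opNorm_one hd,
          Finset.Icc_eq_empty (by omega), Finset.sum_empty, mul_zero, Real.exp_zero, mul_one]
        exact hCθ1
    have hΘ := stmt13.theta_bound hd X1 α β hβ hβα hα m
    have hchain := stmt13.chain α β q1 u hupos n0 hmod (m+1) (by omega) n hkn
    have hw' : ‖w (m+1) - wstar‖ ≤ u (m+1) := hw (m+1) (by omega) hkn
    have hexp := stmt13.exp_step q1 (steps α (m+1))
      (∑ j ∈ Finset.Icc (m+2) n, steps α j) hq1pos hsk hsk1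
    set P := Mprod X1 (steps α) (m+2) n with hPdef
    set Θ := (steps α (m+1) / steps β (m+1)) • (1 : Matrix (Fin d) (Fin d) ℝ) -
        (steps α m / steps β m) • ((1 : Matrix (Fin d) (Fin d) ℝ) - steps α (m+1) • X1)
      with hΘdef
    set Sk := ∑ j ∈ Finset.Icc (m+2) n, steps α j with hSkdef
    calc ‖app (P * Θ * (W1 * W2⁻¹)) (w (m+1) - wstar)‖
        ≤ opNorm (P * Θ * (W1 * W2⁻¹)) * u (m+1) := by
          refine le_trans (stmt13.app_norm_le _ _) ?_
          exact mul_le_mul_of_nonneg_left hw' (stmt13.opNorm_nonneg' _)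
      _ ≤ opNorm P * opNorm Θ * opNorm (W1 * W2⁻¹) * u (m+1) := by
          apply mul_le_mul_of_nonneg_right _ (hupos _).le
          refine le_trans (stmt13.opNorm_mul_le _ _) ?_
          exact mul_le_mul_of_nonneg_right (stmt13.opNorm_mul_le _ _) (stmt13.opNorm_nonneg' _)
      _ ≤ (Cθ * Real.exp (-q1 * Sk)) *
            ((opNorm X1 + 2*(α-β)*(1+opNorm X1)) * (steps α (m+1) / steps β (m+1)) *
              steps α (m+1)) * opNorm (W1 * W2⁻¹) * u (m+1) := by
          apply mul_le_mul_of_nonneg_right _ (hupos _).le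
          apply mul_le_mul_of_nonneg_right _ hCM0
          exact mul_le_mul hP hΘ (stmt13.opNorm_nonneg' _)
            (mul_nonneg hCθ0 (Real.exp_pos _).le)
      _ = (Cθ * (opNorm X1 + 2*(α-β)*(1+opNorm X1)) * opNorm (W1 * W2⁻¹)) *
            steps α (m+1) * Real.exp (-q1 * Sk) *
            (steps α (m+1) / steps β (m+1) * u (m+1)) := by ring
      _ ≤ (Cθ * (opNorm X1 + 2*(α-β)*(1+opNorm X1)) * opNorm (W1 * W2⁻¹)) *
            steps α (m+1) * Real.exp (-q1 * Sk) *
            (steps α n / steps β n * u n * Real.exp (q1/2 * Sk)) := by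
          apply mul_le_mul_of_nonneg_left hchain
          exact mul_nonneg (mul_nonneg (mul_nonneg (mul_nonneg hCθ0 hCU0) hCM0) hsk.le)
            (Real.exp_pos _).le
      _ = (Cθ * (opNorm X1 + 2*(α-β)*(1+opNorm X1)) * opNorm (W1 * W2⁻¹) *
            (steps α n / steps β n * u n)) *
            (steps α (m+1) * Real.exp (-(q1/2) * Sk)) := by
          have hee : Real.exp (-q1 * Sk) * Real.exp (q1/2 * Sk) =
              Real.exp (-(q1/2) * Sk) := by
            rw [← Real.exp_add]; ring_nf
          rw [← hee]; ring
      _ ≤ (Cθ * (opNorm X1 + 2*(α-β)*(1+opNorm X1)) * opNorm (W1 * W2⁻¹) *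
            (steps α n / steps β n * u n)) *
            (2/q1 * Real.exp (q1/2) *
              (Real.exp (-(q1/2) * Sk) - Real.exp (-(q1/2) * (steps α (m+1) + Sk)))) := by
          apply mul_le_mul_of_nonneg_left hexp
          exact mul_nonneg (mul_nonneg (mul_nonneg hCθ0 hCU0) hCM0)
            (mul_nonneg hrn.le (hupos n).le)
      _ = K * (stmt13.g α q1 n (m+1) - stmt13.g α q1 n m) := by
          simp only [stmt13.g]
          rw [stmt13.S_split α m n hkn, hKdef, ← hSkdef]
          ring
  calc ‖∑ k ∈ Finset.Icc (n0 + 1) n,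
        app (Mprod X1 (steps α) (k + 1) n *
              ((steps α k / steps β k) • (1 : Matrix (Fin d) (Fin d) ℝ) -
                (steps α (k - 1) / steps β (k - 1)) •
                  ((1 : Matrix (Fin d) (Fin d) ℝ) - steps α k • X1)) *
              (W1 * W2⁻¹))
          (w k - wstar)‖
      ≤ ∑ k ∈ Finset.Icc (n0 + 1) n,
          ‖app (Mprod X1 (steps α) (k + 1) n *
              ((steps α k / steps β k) • (1 : Matrix (Fin d) (Fin d) ℝ) -
                (steps α (k - 1) / steps β (k - 1)) •
                  ((1 : Matrix (Fin d) (Fin d) ℝ) - steps α k • X1)) *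
              (W1 * W2⁻¹))
          (w k - wstar)‖ := norm_sum_le _ _
    _ ≤ ∑ k ∈ Finset.Icc (n0 + 1) n, K * (stmt13.g α q1 n k - stmt13.g α q1 n (k - 1)) :=
        Finset.sum_le_sum key
    _ = K * ∑ k ∈ Finset.Icc (n0 + 1) n, (stmt13.g α q1 n k - stmt13.g α q1 n (k - 1)) :=
        (Finset.mul_sum _ _ _).symm
    _ = K * (stmt13.g α q1 n n - stmt13.g α q1 n n0) := by
        rw [stmt13.telescope (stmt13.g α q1 n) n0 n hn]
    _ ≤ K * 1 := by
        apply mul_le_mul_of_nonneg_left _ hK0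
        rw [stmt13.g_n]
        have := stmt13.g_pos α q1 n n0
        linarith
    _ = K := mul_one K
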